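/- For any r > 0 there exists C > 0 such that for all t ≥ 0 and x ∈ ℝⁿ, ∫₀^t e^{-(t−τ)/4} (1 + |x|²/(1+τ))^{-r} dτ ≤ C (1 + |x|²/(1+t))^{-r}. -/

import Mathlib

theorem stmt_6 (n : ℕ) (r : ℝ) (hr : 0 < r) :
    ∃ C > 0, ∀ t : ℝ, 0 ≤ t → ∀ x : EuclideanSpace ℝ (Fin n),
      ∫ τ in (0 : ℝ)..t,
          Real.exp (-(t - τ) / 4) * (1 + ‖x‖ ^ 2 / (1 + τ)) ^ (-r) ≤
        C * (1 + ‖x‖ ^ 2 / (1 + t)) ^ (-r) := by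
  refine ⟨4, by norm_num, fun t ht x => ?_⟩
  have h1t : (0:ℝ) < 1 + t := by linarith
  set A : ℝ := (1 + ‖x‖ ^ 2 / (1 + t)) ^ (-r) with hA
  have hAbase : (0:ℝ) < 1 + ‖x‖ ^ 2 / (1 + t) := by positivity
  have hApos : 0 < A := Real.rpow_pos_of_pos hAbase _
  -- continuity of the integrand on [0,t]
  have hcont : ContinuousOn
      (fun τ : ℝ => Real.exp (-(t - τ) / 4) * (1 + ‖x‖ ^ 2 / (1 + τ)) ^ (-r))
      (Set.Icc 0 t) := by
    apply ContinuousOn.mul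
    · exact (Real.continuous_exp.comp (by continuity)).continuousOn
    · apply ContinuousOn.rpow_const
      · exact continuousOn_const.add (continuousOn_const.div
          (by fun_prop) (fun τ hτ => by nlinarith [hτ.1]))
      · intro τ hτ
        left
        have h0 : (0:ℝ) ≤ τ := hτ.1
        have : (0:ℝ) < 1 + τ := by linarith
        positivity
  have hint1 : IntervalIntegrable
      (fun τ : ℝ => Real.exp (-(t - τ) / 4) * (1 + ‖x‖ ^ 2 / (1 + τ)) ^ (-r))
      MeasureTheory.volume 0 t := by
    apply ContinuousOn.intervalIntegrable
    rwa [Set.uIcc_of_le ht]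
  have hint2 : IntervalIntegrable
      (fun τ : ℝ => Real.exp (-(t - τ) / 4) * A) MeasureTheory.volume 0 t :=
    ((Real.continuous_exp.comp (by continuity)).mul continuous_const).intervalIntegrable 0 t
  have hmono : ∫ τ in (0:ℝ)..t,
      Real.exp (-(t - τ) / 4) * (1 + ‖x‖ ^ 2 / (1 + τ)) ^ (-r) ≤
      ∫ τ in (0:ℝ)..t, Real.exp (-(t - τ) / 4) * A := by
    apply intervalIntegral.integral_mono_on ht hint1 hint2
    intro τ hτ
    have h0 : (0:ℝ) ≤ τ := hτ.1
    have h1τ : (0:ℝ) < 1 + τ := by linarith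
    have hbase : 1 + ‖x‖ ^ 2 / (1 + t) ≤ 1 + ‖x‖ ^ 2 / (1 + τ) := by
      have := div_le_div_of_nonneg_left (a := ‖x‖ ^ 2) (b := 1 + t) (c := 1 + τ) (by positivity) h1τ (by linarith [hτ.2])
      linarith
    have hr' : -r ≤ 0 := by linarith
    have := Real.rpow_le_rpow_of_nonpos hAbase hbase hr'
    have hexp : 0 ≤ Real.exp (-(t - τ) / 4) := (Real.exp_pos _).le
    exact mul_le_mul_of_nonneg_left this hexp
  -- compute the exponential integral
  have hF : ∀ τ ∈ Set.uIcc (0:ℝ) t,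
      HasDerivAt (fun s : ℝ => 4 * Real.exp (-(t - s) / 4))
        (Real.exp (-(t - τ) / 4)) τ := by
    intro τ _
    have h1 : HasDerivAt (fun s : ℝ => -(t - s) / 4) (1/4 : ℝ) τ := by
      have := (((hasDerivAt_id τ).const_sub t).neg).div_const (4:ℝ)
      simpa using this
    have h2 := (h1.exp).const_mul (4:ℝ)
    rw [show (4:ℝ) * (Real.exp (-(t - τ) / 4) * (1 / 4)) = Real.exp (-(t - τ) / 4) by ring] at h2
    exact h2
  have hIexp : ∫ τ in (0:ℝ)..t, Real.exp (-(t - τ) / 4)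
      = 4 * Real.exp (-(t - t)/4) - 4 * Real.exp (-(t - 0)/4) := by
    apply intervalIntegral.integral_eq_sub_of_hasDerivAt hF
    apply Continuous.intervalIntegrable
    exact Real.continuous_exp.comp (by continuity)
  have hexple : ∫ τ in (0:ℝ)..t, Real.exp (-(t - τ) / 4) ≤ 4 := by
    rw [hIexp]
    simp only [sub_self, sub_zero, neg_div]
    have : 0 < Real.exp (-(t/4)) := Real.exp_pos _
    simp [Real.exp_zero]
    nlinarith
  have hsplit : ∫ τ in (0:ℝ)..t, Real.exp (-(t - τ) / 4) * A
      = (∫ τ in (0:ℝ)..t, Real.exp (-(t - τ) / 4)) * A := by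
    rw [← intervalIntegral.integral_mul_const]
  refine le_trans hmono ?_
  rw [hsplit]
  exact mul_le_mul_of_nonneg_right hexple hApos.le
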